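/- For an arc-covering p : E → B, the relation on loops at b₀ ∈ B given by α ∼ β iff any two lifts of α and β starting at the same point end at the same point is an equivalence relation, and concatenation induces a well-defined group structure on the set of equivalence classes (the monodromy group π(p,b₀)). -/

import Mathlib

open unitInterval Topology

set_option linter.unnecessarySimpa false

universe u v w

/-- `p : E → B` is an arc-covering: unique lifting of paths given the initial point. -/
def IsArcCovering {E : Type*} {B : Type*} [TopologicalSpace E] [TopologicalSpace B]
    (p : C(E, B)) : Prop :=
  ∀ (e₀ : E) (f : C(I, B)), f 0 = p e₀ →
    ∃! g : C(I, E), p.comp g = f ∧ g 0 = e₀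

/-- The relation identifying the wedge points of a wedge of copies of `(A, a₀)` indexed by `S`. -/
def wedgeRel (S A : Type*) (a₀ : A) (x y : S × A) : Prop :=
  x = y ∨ (x.2 = a₀ ∧ y.2 = a₀)

/-- The wedge (one-point union) of copies of `(A, a₀)` indexed by `S`. -/
def Wedge (S A : Type*) (a₀ : A) : Type _ :=
  Quot (wedgeRel S A a₀)

/-- The topology of a directed wedge: a set is open iff its trace on each copy of `A`
is open, and if it contains the wedge point then it contains all copies of `A`
beyond some index. -/
instance Wedge.instTopologicalSpace (S A : Type*) (a₀ : A) [Preorder S]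
    [IsDirected S (· ≤ ·)] [TopologicalSpace A] : TopologicalSpace (Wedge S A a₀) where
  IsOpen U := (∀ s : S, IsOpen {a : A | Quot.mk (wedgeRel S A a₀) (s, a) ∈ U}) ∧
    ((∃ s : S, Quot.mk (wedgeRel S A a₀) (s, a₀) ∈ U) →
      ∃ t : S, ∀ s : S, t < s → ∀ a : A, Quot.mk (wedgeRel S A a₀) (s, a) ∈ U)
  isOpen_univ := by
    refine ⟨fun s => ?_, fun h => ?_⟩
    · first
        | exact isOpen_univ
        | simpa using (isOpen_univ (X := A))
        | (have h : {a : A | Quot.mk (wedgeRel S A a₀) (s, a) ∈ (Set.univ : Set (Wedge S A a₀))}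
              = Set.univ := Set.eq_univ_of_forall fun _ => Set.mem_univ _
           rw [h]; exact isOpen_univ)
    · obtain ⟨s, -⟩ := h
      exact ⟨s, fun _ _ _ => trivial⟩
  isOpen_inter := by
    rintro U V ⟨hU1, hU2⟩ ⟨hV1, hV2⟩
    refine ⟨fun s => (hU1 s).inter (hV1 s), fun h => ?_⟩
    obtain ⟨tU, htU⟩ := hU2 ⟨h.choose, h.choose_spec.1⟩
    obtain ⟨tV, htV⟩ := hV2 ⟨h.choose, h.choose_spec.2⟩
    obtain ⟨t, ht1, ht2⟩ := directed_of (· ≤ ·) tU tV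
    exact ⟨t, fun s hs a => ⟨htU s (lt_of_le_of_lt ht1 hs) a, htV s (lt_of_le_of_lt ht2 hs) a⟩⟩
  isOpen_sUnion := by
    intro C hC
    constructor
    · intro s
      have : {a : A | Quot.mk (wedgeRel S A a₀) (s, a) ∈ ⋃₀ C} =
          ⋃ U ∈ C, {a : A | Quot.mk (wedgeRel S A a₀) (s, a) ∈ U} := by
        ext a
        simp only [Set.mem_setOf_eq, Set.mem_sUnion, Set.mem_iUnion, exists_prop]
        exact Iff.rfl
      rw [this]
      exact isOpen_biUnion fun U hU => (hC U hU).1 s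
    · rintro ⟨s, hs⟩
      obtain ⟨U, hUC, hsU⟩ := hs
      obtain ⟨t, ht⟩ := (hC U hUC).2 ⟨s, hsU⟩
      exact ⟨t, fun s' hs' a => ⟨U, hUC, ht s' hs' a⟩⟩

/-- An arc-hedgehog over a directed set `S`: the directed wedge of copies of `([0,1], 0)`. -/
def ArcHedgehog (S : Type*) : Type _ := Wedge S I 0

instance (S : Type*) [Preorder S] [IsDirected S (· ≤ ·)] : TopologicalSpace (ArcHedgehog S) :=
  Wedge.instTopologicalSpace S I 0

/-- `p` is an arc-hedgehog covering: maps from arc-hedgehogs lift uniquely. -/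
def IsArcHedgehogCovering {E : Type*} {B : Type*} [TopologicalSpace E] [TopologicalSpace B]
    (p : C(E, B)) : Prop :=
  ∀ (S : Type u) [Preorder S] [IsDirected S (· ≤ ·)],
    ∀ (e₀ : E) (f : C(ArcHedgehog S, B)) (z₀ : ArcHedgehog S), f z₀ = p e₀ →
      ∃! g : C(ArcHedgehog S, E), p.comp g = f ∧ g z₀ = e₀

/-- The closed unit `2`-disk. -/
noncomputable def Disk : Type := Metric.closedBall (0 : EuclideanSpace ℝ (Fin 2)) 1

noncomputable instance : TopologicalSpace Disk := by unfold Disk; infer_instance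

/-- The center of the disk. -/
noncomputable def Disk.center : Disk := ⟨0, by simp⟩

/-- A disk-hedgehog over a directed set `S`: the directed wedge of copies of the pointed disk. -/
def DiskHedgehog (S : Type*) : Type _ := Wedge S Disk Disk.center

noncomputable instance (S : Type*) [Preorder S] [IsDirected S (· ≤ ·)] : TopologicalSpace (DiskHedgehog S) :=
  Wedge.instTopologicalSpace S Disk Disk.center

/-- `p` is a disk-hedgehog covering: maps from disk-hedgehogs lift uniquely. -/
def IsDiskHedgehogCovering {E : Type*} {B : Type*} [TopologicalSpace E] [TopologicalSpace B]
    (p : C(E, B)) : Prop :=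
  ∀ (S : Type u) [Preorder S] [IsDirected S (· ≤ ·)],
    ∀ (e₀ : E) (f : C(DiskHedgehog S, B)) (z₀ : DiskHedgehog S), f z₀ = p e₀ →
      ∃! g : C(DiskHedgehog S, E), p.comp g = f ∧ g z₀ = e₀

/-- `p` is a disk-covering: maps from the closed `2`-disk lift uniquely. -/
def IsDiskCovering {E : Type*} {B : Type*} [TopologicalSpace E] [TopologicalSpace B]
    (p : C(E, B)) : Prop :=
  ∀ (e₀ : E) (f : C(Disk, B)) (d₀ : Disk), f d₀ = p e₀ →
    ∃! g : C(Disk, E), p.comp g = f ∧ g d₀ = e₀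

/-- Path components of preimages of neighborhoods form a neighborhood basis of the
total space. -/
def HedgehogBasisCondition {E : Type*} {B : Type*} [TopologicalSpace E] [TopologicalSpace B]
    (p : C(E, B)) : Prop :=
  ∀ (e₀ : E) (U : Set E), IsOpen U → e₀ ∈ U →
    ∃ V ∈ 𝓝 (p e₀), {y : E | JoinedIn (p ⁻¹' V) e₀ y} ⊆ U

/-- The monodromy relation on loops at `b₀`: two loops are identified iff any two of
their lifts starting at the same point end at the same point. -/
def MonodromyRel {E : Type*} {B : Type*} [TopologicalSpace E] [TopologicalSpace B]
    (p : C(E, B)) (b₀ : B) (α β : Path b₀ b₀) : Prop :=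
  ∀ g h : C(I, E), (∀ t, p (g t) = α t) → (∀ t, p (h t) = β t) →
    g 0 = h 0 → g 1 = h 1

/-- `p` is regular: for each loop in `B`, all lifts are loops or all lifts are non-loops. -/
def IsRegularCovering {E : Type*} {B : Type*} [TopologicalSpace E] [TopologicalSpace B]
    (p : C(E, B)) : Prop :=
  ∀ (b : B) (α : Path b b) (g h : C(I, E)),
    (∀ t, p (g t) = α t) → (∀ t, p (h t) = α t) → g 0 = g 1 → h 0 = h 1


section MonodromyAux

variable {E B : Type*} [TopologicalSpace E] [TopologicalSpace B]
  {p : C(E, B)} {b₀ : B}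

/-- The unique lift of a loop `α` at `b₀` starting at `e`. -/
noncomputable def MLift (hp : IsArcCovering p) (α : Path b₀ b₀) (e : E) (he : p e = b₀) :
    C(I, E) :=
  (hp e α.toContinuousMap (by simp [he])).choose

lemma MLift_proj (hp : IsArcCovering p) (α : Path b₀ b₀) (e : E) (he : p e = b₀) (t : I) :
    p (MLift hp α e he t) = α t := by
  have h := (hp e α.toContinuousMap (by simp [he])).choose_spec.1.1
  calc p (MLift hp α e he t) = p.comp (MLift hp α e he) t := rfl
    _ = α.toContinuousMap t := by rw [MLift, h]
    _ = α t := rfl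

lemma MLift_zero (hp : IsArcCovering p) (α : Path b₀ b₀) (e : E) (he : p e = b₀) :
    MLift hp α e he 0 = e :=
  (hp e α.toContinuousMap (by simp [he])).choose_spec.1.2

lemma MLift_unique (hp : IsArcCovering p) (α : Path b₀ b₀) (e : E) (he : p e = b₀)
    (g : C(I, E)) (h1 : ∀ t, p (g t) = α t) (h2 : g 0 = e) :
    g = MLift hp α e he :=
  (hp e α.toContinuousMap (by simp [he])).choose_spec.2 g
    ⟨ContinuousMap.ext fun t => by simpa using h1 t, h2⟩

/-- Monodromy transport along a loop. -/
noncomputable def mtau (hp : IsArcCovering p) (α : Path b₀ b₀) (e : {e : E // p e = b₀}) :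
    {e : E // p e = b₀} :=
  ⟨MLift hp α e.1 e.2 1, by rw [MLift_proj]; simp⟩

lemma monodromyRel_iff (hp : IsArcCovering p) (α β : Path b₀ b₀) :
    MonodromyRel p b₀ α β ↔ ∀ e, mtau hp α e = mtau hp β e := by
  constructor
  · intro h e
    have := h (MLift hp α e.1 e.2) (MLift hp β e.1 e.2)
      (MLift_proj hp α e.1 e.2) (MLift_proj hp β e.1 e.2)
      (by rw [MLift_zero, MLift_zero])
    exact Subtype.ext this
  · intro h g g' hg hg' h0
    have he : p (g 0) = b₀ := by rw [hg 0]; simp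
    have e : {e : E // p e = b₀} := ⟨g 0, he⟩
    have hgu : g = MLift hp α (g 0) he := MLift_unique hp α (g 0) he g hg rfl
    have hgu' : g' = MLift hp β (g 0) he := MLift_unique hp β (g 0) he g' hg' h0.symm
    have := congrArg Subtype.val (h ⟨g 0, he⟩)
    simp only [mtau] at this
    rw [hgu, hgu']
    exact this

/-- The lift as a `Path`. -/
noncomputable def mPathLift (hp : IsArcCovering p) (α : Path b₀ b₀) (e : {e : E // p e = b₀}) :
    Path (e : E) ((mtau hp α e : E)) where
  toContinuousMap := MLift hp α e.1 e.2
  source' := MLift_zero hp α e.1 e.2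
  target' := rfl

lemma mPathLift_apply (hp : IsArcCovering p) (α : Path b₀ b₀) (e : {e : E // p e = b₀}) (t : I) :
    mPathLift hp α e t = MLift hp α e.1 e.2 t := rfl

lemma mtau_trans (hp : IsArcCovering p) (α β : Path b₀ b₀) (e : {e : E // p e = b₀}) :
    mtau hp (α.trans β) e = mtau hp β (mtau hp α e) := by
  set g : Path (e : E) ((mtau hp β (mtau hp α e) : E)) :=
    (mPathLift hp α e).trans (mPathLift hp β (mtau hp α e)) with hgdef
  have hg : ∀ t, p (g t) = (α.trans β) t := by
    intro t
    rw [hgdef]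
    simp only [Path.trans_apply]
    split_ifs with h
    · rw [mPathLift_apply, MLift_proj]
    · rw [mPathLift_apply, MLift_proj]
  have h0 : g.toContinuousMap 0 = (e : E) := g.source'
  have hu : g.toContinuousMap = MLift hp (α.trans β) e.1 e.2 :=
    MLift_unique hp (α.trans β) e.1 e.2 g.toContinuousMap (fun t => hg t) h0
  apply Subtype.ext
  show MLift hp (α.trans β) e.1 e.2 1 = _
  rw [← hu]
  exact g.target'

lemma mtau_refl (hp : IsArcCovering p) (e : {e : E // p e = b₀}) :
    mtau hp (Path.refl b₀) e = e := by
  set g : C(I, E) := ContinuousMap.const I (e : E) with hgdef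
  have hg : ∀ t, p (g t) = (Path.refl b₀) t := by
    intro t; simp [hgdef, e.2]
  have hu : g = MLift hp (Path.refl b₀) e.1 e.2 :=
    MLift_unique hp _ e.1 e.2 g hg rfl
  apply Subtype.ext
  show MLift hp (Path.refl b₀) e.1 e.2 1 = (e : E)
  rw [← hu]
  rfl

lemma mtau_symm (hp : IsArcCovering p) (α : Path b₀ b₀) (e : {e : E // p e = b₀}) :
    mtau hp α.symm (mtau hp α e) = e := by
  set g : Path ((mtau hp α e : E)) (e : E) := (mPathLift hp α e).symm with hgdef
  have hg : ∀ t, p (g t) = α.symm t := by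
    intro t
    show p ((mPathLift hp α e) (unitInterval.symm t)) = α (unitInterval.symm t)
    rw [mPathLift_apply, MLift_proj]
  have hu : g.toContinuousMap = MLift hp α.symm (mtau hp α e).1 (mtau hp α e).2 :=
    MLift_unique hp α.symm _ _ g.toContinuousMap (fun t => hg t) g.source'
  apply Subtype.ext
  show MLift hp α.symm (mtau hp α e).1 (mtau hp α e).2 1 = (e : E)
  rw [← hu]
  exact g.target'

lemma mtau_symm' (hp : IsArcCovering p) (α : Path b₀ b₀) (e : {e : E // p e = b₀}) :
    mtau hp α (mtau hp α.symm e) = e := by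
  have := mtau_symm hp α.symm e
  rwa [Path.symm_symm] at this

end MonodromyAux

/-- the monodromy relation is an equivalence relation and concatenation
induces a group structure on the quotient (the monodromy group `π(p, b₀)`). -/
theorem monodromy_group_exists {E B : Type*} [TopologicalSpace E] [TopologicalSpace B]
    (p : C(E, B)) (hp : IsArcCovering p) (b₀ : B) :
    Equivalence (MonodromyRel p b₀) ∧
      ∃ instG : Group (Quot (MonodromyRel p b₀)),
        ∀ α β : Path b₀ b₀,
          Quot.mk (MonodromyRel p b₀) (α.trans β) =
            instG.mul (Quot.mk (MonodromyRel p b₀) α) (Quot.mk (MonodromyRel p b₀) β) := by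
  have equiv : Equivalence (MonodromyRel p b₀) := by
    refine ⟨fun α => (monodromyRel_iff hp _ _).2 fun e => rfl,
      fun h => (monodromyRel_iff hp _ _).2 fun e => ((monodromyRel_iff hp _ _).1 h e).symm,
      fun h1 h2 => (monodromyRel_iff hp _ _).2 fun e =>
        ((monodromyRel_iff hp _ _).1 h1 e).trans ((monodromyRel_iff hp _ _).1 h2 e)⟩
  refine ⟨equiv, ?_⟩
  have hmul : ∀ a b₁ b₂ : Path b₀ b₀, MonodromyRel p b₀ b₁ b₂ →
      MonodromyRel p b₀ (a.trans b₁) (a.trans b₂) := by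
    intro a b₁ b₂ h
    rw [monodromyRel_iff hp] at h ⊢
    intro e
    rw [mtau_trans, mtau_trans, h]
  have hmul' : ∀ a₁ a₂ b : Path b₀ b₀, MonodromyRel p b₀ a₁ a₂ →
      MonodromyRel p b₀ (a₁.trans b) (a₂.trans b) := by
    intro a₁ a₂ b h
    rw [monodromyRel_iff hp] at h ⊢
    intro e
    rw [mtau_trans, mtau_trans, h]
  have hinv : ∀ a₁ a₂ : Path b₀ b₀, MonodromyRel p b₀ a₁ a₂ →
      MonodromyRel p b₀ a₁.symm a₂.symm := by
    intro a₁ a₂ h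
    rw [monodromyRel_iff hp] at h ⊢
    intro e
    have h1 : mtau hp a₁ (mtau hp a₁.symm e) = e := mtau_symm' hp a₁ e
    have h2 : mtau hp a₂ (mtau hp a₁.symm e) = e := by rw [← h, h1]
    calc mtau hp a₁.symm e = mtau hp a₂.symm (mtau hp a₂ (mtau hp a₁.symm e)) :=
          (mtau_symm hp a₂ _).symm
      _ = mtau hp a₂.symm e := by rw [h2]
  refine ⟨{
    mul := Quot.map₂ Path.trans hmul hmul'
    one := Quot.mk _ (Path.refl b₀)
    inv := Quot.map Path.symm hinv
    mul_assoc := by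
      intro a b c
      induction a using Quot.ind with | _ a => ?_
      induction b using Quot.ind with | _ b => ?_
      induction c using Quot.ind with | _ c => ?_
      exact Quot.sound ((monodromyRel_iff hp _ _).2 fun e => by
        simp only [mtau_trans])
    one_mul := by
      intro a
      induction a using Quot.ind with | _ a => ?_
      exact Quot.sound ((monodromyRel_iff hp _ _).2 fun e => by
        simp only [mtau_trans, mtau_refl])
    mul_one := by
      intro a
      induction a using Quot.ind with | _ a => ?_
      exact Quot.sound ((monodromyRel_iff hp _ _).2 fun e => by
        simp only [mtau_trans, mtau_refl])
    inv_mul_cancel := by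
      intro a
      induction a using Quot.ind with | _ a => ?_
      exact Quot.sound ((monodromyRel_iff hp _ _).2 fun e => by
        simp only [mtau_trans, mtau_refl, mtau_symm' hp a e]) }, ?_⟩
  intro α β
  rfl
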